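/- arXiv:1301.1611 — 3 statements merged into one kernel-verified Lean document; each statement's English description precedes it below -/
import Mathlib

section
/- Let E and F be Banach spaces and T a closed densely defined unbounded operator from E to F, with transpose (adjoint) operator T' from the dual F' to the dual E'. Then the closure of the range of T equals the polar (pre-annihilator) of the kernel of T', i.e. the set of x in F such that ŌÉ(x) = 0 for every ŌÉ in ker T'. -/
/-- `T'` is the transpose (Banach-space adjoint) of the densely defined unbounded operator
`T` from `E` to `F`: the domain of `T'` consists of those continuous linear functionals
`sigma` in `F'` for which `x mapsto sigma (T x)` is continuous on `Dom T`, i.e. extends to a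
continuous functional `tau` in `E'`, and then `T' sigma = tau` (such a `tau` is unique since
`Dom T` is dense in `E`). -/
structure IsTranspose {E F : Type*} [NormedAddCommGroup E] [NormedSpace ℝ E]
    [NormedAddCommGroup F] [NormedSpace ℝ F]
    (T : E →ₗ.[ℝ] F) (T' : StrongDual ℝ F →ₗ.[ℝ] StrongDual ℝ E) : Prop where
  mem_domain_iff : ∀ sigma : StrongDual ℝ F,
    sigma ∈ T'.domain ↔
      ∃ tau : StrongDual ℝ E, ∀ x : T.domain, tau (x : E) = sigma (T x)
  apply_eq : ∀ (sigma : T'.domain) (x : T.domain),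
    (T' sigma) (x : E) = (sigma : StrongDual ℝ F) (T x)

/-- Let `E` and `F` be Banach spaces and `T` a closed densely defined unbounded operator
from `E` to `F`, with transpose `T' : F' → E'`.  Then the closure of the range of `T`
equals the polar (pre-annihilator) of the kernel of `T'`, i.e. the set of `y` in `F` such
that `sigma y = 0` for every `sigma` in `ker T'`. -/
theorem closure_range_eq_polar_ker_transpose
    {E F : Type*} [NormedAddCommGroup E] [NormedSpace ℝ E] [CompleteSpace E]
    [NormedAddCommGroup F] [NormedSpace ℝ F] [CompleteSpace F]
    (T : E →ₗ.[ℝ] F) (hTclosed : T.IsClosed) (hTdense : Dense (T.domain : Set E))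
    (T' : StrongDual ℝ F →ₗ.[ℝ] StrongDual ℝ E)
    (hT' : IsTranspose T T') :
    closure (Set.range fun x : T.domain => T x)
      = {y : F | ∀ sigma : T'.domain, T' sigma = 0 →
          (sigma : StrongDual ℝ F) y = 0} := by
  set S : Submodule ℝ F := LinearMap.range T.toFun with hS
  have hRS : (Set.range fun x : T.domain => T x) = (S : Set F) := by
    ext a
    simp [hS, LinearMap.mem_range]
  rw [hRS]
  have hclS : closure (S : Set F) = (S.topologicalClosure : Set F) := rfl
  ext y
  constructor
  · -- forward direction
    intro hy sigma hsig
    have hvanish : ∀ a ∈ (S : Set F), (sigma : StrongDual ℝ F) a = 0 := by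
      rintro a ⟨x, rfl⟩
      have h := hT'.apply_eq sigma x
      rw [hsig] at h
      simpa using h.symm
    have hclosed : IsClosed {a : F | (sigma : StrongDual ℝ F) a = 0} :=
      isClosed_eq (sigma : StrongDual ℝ F).continuous continuous_const
    exact closure_minimal hvanish hclosed hy
  · -- reverse direction, by contradiction via Hahn-Banach separation
    intro hy
    by_contra hyc
    obtain ⟨f, u, hfa, hfy⟩ :=
      geometric_hahn_banach_closed_point
        (hclS ▸ (S.topologicalClosure.convex) : Convex ℝ (closure (S : Set F)))
        isClosed_closure hyc
    -- f vanishes on closure S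
    have hf0 : ∀ a ∈ closure (S : Set F), f a = 0 := by
      intro a ha
      by_contra hfa0
      have hmem : ((u + 1) / f a) • a ∈ closure (S : Set F) := by
        rw [hclS] at ha ⊢
        exact S.topologicalClosure.smul_mem _ ha
      have := hfa _ hmem
      rw [map_smul, smul_eq_mul, div_mul_cancel₀ _ hfa0] at this
      linarith
    have hu_pos : 0 < u := by
      have := hfa 0 (subset_closure S.zero_mem)
      simpa using this
    -- f belongs to the domain of T'
    have hmemT' : (f : StrongDual ℝ F) ∈ T'.domain := by
      rw [hT'.mem_domain_iff]
      refine ⟨0, fun x => ?_⟩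
      have : T x ∈ closure (S : Set F) :=
        subset_closure (LinearMap.mem_range.2 ⟨x, rfl⟩)
      simp [hf0 _ this]
    set sigma : T'.domain := ⟨f, hmemT'⟩ with hsigma
    have hTsigma : T' sigma = 0 := by
      refine ContinuousLinearMap.ext_on (s := (T.domain : Set E))
        (hTdense.mono Submodule.subset_span) ?_
      rintro x hx
      have := hT'.apply_eq sigma ⟨x, hx⟩
      have hTx : T ⟨x, hx⟩ ∈ closure (S : Set F) :=
        subset_closure (LinearMap.mem_range.2 ⟨⟨x, hx⟩, rfl⟩)
      simpa using this.trans (hf0 _ hTx)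
    have := hy sigma hTsigma
    have : f y = 0 := this
    linarith
end

section
/- Let (E^‚ÄĘ, d) be a cohomological complex of Banach spaces (closed densely defined operators d^q : E^q ‚áĎ E^{q+1} with d^{q+1} ‚ąė d^q = 0) and let (E'_‚ÄĘ, d') be its dual homological complex. If the homology group H_{q+1}(E'_‚ÄĘ) = ker d'_q / im d'_{q+1} vanishes, then the cohomology group H^{q+1}(E^‚ÄĘ) = ker d^{q+1} / im d^q is either zero or non-Hausdorff (i.e. if im d^q is closed, then H^{q+1}(E^‚ÄĘ) = 0). -/
/-- Let `(E^bullet, d)` be a cohomological complex of Banach spaces (closed densely defined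
operators `d^q : E^q → E^(q+1)` with `d^(q+1) comp d^q = 0`) and let `(E'_bullet, d')`
be its dual homological complex, `d'_q` being the transpose of `d^q`.  If the homology group
`H_(q+1)(E') = ker d'_q / im d'_(q+1)` vanishes, then the cohomology group
`H^(q+1)(E) = ker d^(q+1) / im d^q` is either zero or non-Hausdorff: if the image of `d^q`
is closed, then every element of `ker d^(q+1)` lies in the range of `d^q`. -/
theorem cohomology_zero_or_nonseparated
    (E : ℤ → Type*) [∀ q, NormedAddCommGroup (E q)]
    [∀ q, NormedSpace ℝ (E q)] [∀ q, CompleteSpace (E q)]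
    (d : ∀ q : ℤ, E q →ₗ.[ℝ] E (q+1))
    (hdc : ∀ q, (d q).IsClosed) (hdd : ∀ q, Dense ((d q).domain : Set (E q)))
    (hcomp : ∀ (q : ℤ) (x : (d q).domain) (hx : (d q) x ∈ (d (q+1)).domain),
      (d (q+1)) ⟨(d q) x, hx⟩ = 0)
    (d' : ∀ q : ℤ,
      StrongDual ℝ (E (q+1)) →ₗ.[ℝ] StrongDual ℝ (E q))
    (hd' : ∀ q, IsTranspose (d q) (d' q)) (q : ℤ)
    (hvanish : ∀ sigma : (d' q).domain, (d' q) sigma = 0 →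
      ∃ tau : (d' (q+1)).domain,
        (d' (q+1)) tau = (sigma : StrongDual ℝ (E (q+1))))
    (hclosed : IsClosed (Set.range fun x : (d q).domain => (d q) x)) :
    ∀ y : (d (q+1)).domain, (d (q+1)) y = 0 →
      ∃ x : (d q).domain, (d q) x = (y : E (q+1)) := by

  intro y hy0
  by_contra hcon
  push_neg at hcon
  -- The range of `d q` as a submodule
  set R : Submodule ℝ (E (q+1)) := LinearMap.range (d q).toFun with hR
  have hRc : IsClosed (R : Set (E (q+1))) := by
    rw [hR, LinearMap.coe_range]; exact hclosed
  have hyR : (y : E (q+1)) ∉ R := by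
    rintro ⟨x, hx⟩
    exact hcon x hx
  haveI : IsClosed (R : Set (E (q+1))) := hRc
  -- the quotient map as a continuous linear map
  let mkC : E (q+1) →L[ℝ] (E (q+1) ⧸ R) :=
    LinearMap.mkContinuous R.mkQ 1 (fun m => by
      simpa using Submodule.Quotient.norm_mk_le R m)
  have hmkY : R.mkQ (y : E (q+1)) ≠ 0 := by
    rw [Submodule.mkQ_apply, Ne, Submodule.Quotient.mk_eq_zero]
    exact hyR
  obtain ⟨g, -, hg⟩ := exists_dual_vector ℝ (R.mkQ (y : E (q+1))) (norm_ne_zero_iff.mpr hmkY)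
  let σ : StrongDual ℝ (E (q+1)) := g.comp mkC
  have hσy : σ (y : E (q+1)) ≠ 0 := by
    have : σ (y : E (q+1)) = ‖R.mkQ (y : E (q+1))‖ := hg
    rw [this]
    exact norm_ne_zero_iff.mpr hmkY
  have hσR : ∀ x : (d q).domain, σ ((d q) x) = 0 := by
    intro x
    have hmem : (d q) x ∈ R := ⟨x, rfl⟩
    show g (mkC ((d q) x)) = 0
    have : mkC ((d q) x) = 0 := (Submodule.Quotient.mk_eq_zero R).mpr hmem
    rw [this, map_zero]
  have hmem : σ ∈ (d' q).domain :=
    ((hd' q).mem_domain_iff σ).mpr ⟨0, fun x => by simp [hσR x]⟩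
  have hzero : (d' q) ⟨σ, hmem⟩ = 0 := by
    apply DFunLike.coe_injective
    apply Continuous.ext_on (hdd q) ((d' q) ⟨σ, hmem⟩).continuous (0 : StrongDual ℝ (E q)).continuous
    intro x hx
    have h1 := (hd' q).apply_eq ⟨σ, hmem⟩ ⟨x, hx⟩
    simpa [hσR ⟨x, hx⟩] using h1
  obtain ⟨τ, hτ⟩ := hvanish ⟨σ, hmem⟩ hzero
  have h2 := (hd' (q+1)).apply_eq τ y
  rw [hy0] at h2
  simp only [map_zero] at h2
  rw [hτ] at h2
  exact hσy h2
end

section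
/- Let (E^‚ÄĘ, d) and (E'_‚ÄĘ, d') be dual complexes of reflexive Banach spaces with closed densely defined operators. If H_q(E'_‚ÄĘ) is Hausdorff (the range of d'_q is closed) and H_{q+1}(E'_‚ÄĘ) = 0, then H^{q+1}(E^‚ÄĘ) = 0; that is, every element of ker d^{q+1} lies in the range of d^q. -/
set_option maxHeartbeats 1000000 in
/-- Let `(E^bullet, d)` and `(E'_bullet, d')` be dual complexes of reflexive Banach spaces
with closed densely defined operators.  If `H_q(E'_bullet)` is Hausdorff (the range of
`d'_q` is closed) and `H_(q+1)(E'_bullet) = 0`, then `H^(q+1)(E^bullet) = 0`: every element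
of `ker d^(q+1)` lies in the range of `d^q`. -/
theorem vanishing_from_dual
    (E : ℤ → Type*) [∀ q, NormedAddCommGroup (E q)]
    [∀ q, NormedSpace ℝ (E q)] [∀ q, CompleteSpace (E q)]
    (hrefl : ∀ q, Function.Surjective (NormedSpace.inclusionInDoubleDual ℝ (E q)))
    (d : ∀ q : ℤ, E q →ₗ.[ℝ] E (q+1))
    (hdc : ∀ q, (d q).IsClosed) (hdd : ∀ q, Dense ((d q).domain : Set (E q)))
    (hcomp : ∀ (q : ℤ) (x : (d q).domain) (hx : (d q) x ∈ (d (q+1)).domain),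
      (d (q+1)) ⟨(d q) x, hx⟩ = 0)
    (d' : ∀ q : ℤ,
      StrongDual ℝ (E (q+1)) →ₗ.[ℝ] StrongDual ℝ (E q))
    (hd' : ∀ q, IsTranspose (d q) (d' q)) (q : ℤ)
    (hsep : IsClosed (Set.range fun sigma : (d' q).domain => (d' q) sigma))
    (hvanish : ∀ sigma : (d' q).domain, (d' q) sigma = 0 →
      ∃ tau : (d' (q+1)).domain,
        (d' (q+1)) tau = (sigma : StrongDual ℝ (E (q+1)))) :
    ∀ y : (d (q+1)).domain, (d (q+1)) y = 0 →
      ∃ x : (d q).domain, (d q) x = (y : E (q+1)) := by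
  intro y hy
  -- helper: two functionals on `E q` agreeing on the dense domain of `d q` are equal
  have hext : ∀ f g : StrongDual ℝ (E q),
      (∀ v : (d q).domain, f (v : E q) = g (v : E q)) → f = g := by
    intro f g h
    exact DFunLike.coe_injective (Continuous.ext_on (hdd q) f.continuous g.continuous
      (fun v hv => h ⟨v, hv⟩))
  -- Step A: every element of `ker d'_q` vanishes on `y`
  have hkery : ∀ σ : (d' q).domain, (d' q) σ = 0 →
      (σ : StrongDual ℝ (E (q+1))) (y : E (q+1)) = 0 := by
    intro σ hσ
    obtain ⟨τ, hτ⟩ := hvanish σ hσ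
    have h1 := (hd' (q+1)).apply_eq τ y
    rw [hτ, hy] at h1
    simpa using h1
  have hwd : ∀ σ₁ σ₂ : (d' q).domain, (d' q) σ₁ = (d' q) σ₂ →
      (σ₁ : StrongDual ℝ (E (q+1))) (y : E (q+1))
        = (σ₂ : StrongDual ℝ (E (q+1))) (y : E (q+1)) := by
    intro σ₁ σ₂ h
    have h0 : (d' q) (σ₁ - σ₂) = 0 := by rw [LinearPMap.map_sub, h, sub_self]
    have := hkery _ h0
    simp only [Submodule.coe_sub, ContinuousLinearMap.sub_apply] at this
    linarith
  -- The graph of `d' q` is closed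
  set G : Submodule ℝ (StrongDual ℝ (E (q+1)) × StrongDual ℝ (E q)) :=
    (d' q).graph with hG
  have hGmem : ∀ σ τ, (σ, τ) ∈ G ↔ ∀ v : (d q).domain, τ (v : E q) = σ ((d q) v) := by
    intro σ τ
    constructor
    · rintro hg
      rw [hG, LinearPMap.mem_graph_iff] at hg
      obtain ⟨σ₀, hσ₀, hτ⟩ := hg
      intro v
      have := (hd' q).apply_eq σ₀ v
      simp only at hσ₀ hτ
      rw [hτ, hσ₀] at this
      exact this
    · intro h
      have hmem : σ ∈ (d' q).domain := ((hd' q).mem_domain_iff σ).2 ⟨τ, h⟩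
      have hval : (d' q) ⟨σ, hmem⟩ = τ := by
        apply hext
        intro v
        rw [(hd' q).apply_eq ⟨σ, hmem⟩ v]
        exact (h v).symm
      rw [hG, LinearPMap.mem_graph_iff]
      exact ⟨⟨σ, hmem⟩, rfl, hval⟩
  have hGclosed : IsClosed (G : Set (StrongDual ℝ (E (q+1)) × StrongDual ℝ (E q))) := by
    have : (G : Set (StrongDual ℝ (E (q+1)) × StrongDual ℝ (E q))) =
        ⋂ v : (d q).domain,
          {p : StrongDual ℝ (E (q+1)) × StrongDual ℝ (E q) |
            p.2 (v : E q) = p.1 ((d q) v)} := by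
      ext ⟨σ, τ⟩
      simp only [SetLike.mem_coe, Set.mem_iInter, Set.mem_setOf_eq]
      exact hGmem σ τ
    rw [this]
    refine isClosed_iInter fun v => isClosed_eq ?_ ?_
    · exact ((NormedSpace.inclusionInDoubleDual ℝ (E q) (v : E q)).continuous).comp
        continuous_snd
    · exact ((NormedSpace.inclusionInDoubleDual ℝ (E (q+1)) ((d q) v)).continuous).comp
        continuous_fst
  haveI : CompleteSpace G := hGclosed.completeSpace_coe
  -- the projection of the graph to the second factor
  set π : G →L[ℝ] StrongDual ℝ (E q) :=
    (ContinuousLinearMap.snd ℝ (StrongDual ℝ (E (q+1))) (StrongDual ℝ (E q))).comp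
      G.subtypeL with hπ
  set p : Submodule ℝ (StrongDual ℝ (E q)) := LinearMap.range (π : G →ₗ[ℝ] StrongDual ℝ (E q)) with hp
  have hprange : (p : Set (StrongDual ℝ (E q))) =
      Set.range fun σ : (d' q).domain => (d' q) σ := by
    ext τ
    simp only [SetLike.mem_coe, LinearMap.mem_range, Set.mem_range]
    constructor
    · rintro ⟨g, rfl⟩
      obtain ⟨⟨σ, τ'⟩, hg⟩ := g
      rw [LinearPMap.mem_graph_iff] at hg
      obtain ⟨σ₀, hσ₀, hτ'⟩ := hg
      exact ⟨σ₀, hτ'⟩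
    · rintro ⟨σ, rfl⟩
      exact ⟨⟨((σ : StrongDual ℝ (E (q+1))), (d' q) σ), (d' q).mem_graph σ⟩, rfl⟩
  have hpclosed : IsClosed (p : Set (StrongDual ℝ (E q))) := by
    rw [hprange]; exact hsep
  haveI : CompleteSpace p := hpclosed.completeSpace_coe
  set π' : G →L[ℝ] p := π.codRestrict p (fun g => LinearMap.mem_range_self (π : G →ₗ[ℝ] StrongDual ℝ (E q)) g) with hπ'
  have hπ'_surj : Function.Surjective π' := by
    rintro ⟨τ, hτ⟩
    obtain ⟨g, hg⟩ := hτ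
    exact ⟨g, Subtype.ext hg⟩
  obtain ⟨C, hC0, hC⟩ := @ContinuousLinearMap.exists_preimage_norm_le ℝ ℝ _ _ (RingHom.id ℝ) G _ _ p _ _ π' (RingHom.id ℝ) _ _ _ _ _ hπ'_surj
  choose g hg1 hg2 using hC
  -- well-definedness of "apply the first component to y"
  have hwdG : ∀ a b : G, (a : StrongDual ℝ (E (q+1)) × StrongDual ℝ (E q)).2 = (b : StrongDual ℝ (E (q+1)) × StrongDual ℝ (E q)).2 →
      (a : StrongDual ℝ (E (q+1)) × StrongDual ℝ (E q)).1 (y : E (q+1)) = (b : StrongDual ℝ (E (q+1)) × StrongDual ℝ (E q)).1 (y : E (q+1)) := by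
    rintro ⟨⟨σa, τa⟩, ha⟩ ⟨⟨σb, τb⟩, hb⟩ h
    simp only at h ⊢
    rw [hG, LinearPMap.mem_graph_iff] at ha hb
    obtain ⟨σa₀, ha₀, hτa⟩ := ha
    obtain ⟨σb₀, hb₀, hτb⟩ := hb
    simp only at ha₀ hb₀ hτa hτb
    subst ha₀; subst hb₀
    exact hwd σa₀ σb₀ (by rw [hτa, hτb, h])
  have hg2nd : ∀ ρ : p, ((g ρ : G) : StrongDual ℝ (E (q+1)) × StrongDual ℝ (E q)).2 = (ρ : StrongDual ℝ (E q)) := by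
    intro ρ
    have := hg1 ρ
    have : (π' (g ρ) : StrongDual ℝ (E q)) = (ρ : StrongDual ℝ (E q)) := by
      rw [this]
    exact this
  -- the functional on the range of d'_q
  set φ₀ : p → ℝ := fun ρ => ((g ρ : G) : StrongDual ℝ (E (q+1)) × StrongDual ℝ (E q)).1 (y : E (q+1)) with hφ₀
  have hφ₀wd : ∀ (ρ : p) (a : G), (a : StrongDual ℝ (E (q+1)) × StrongDual ℝ (E q)).2 = (ρ : StrongDual ℝ (E q)) →
      φ₀ ρ = (a : StrongDual ℝ (E (q+1)) × StrongDual ℝ (E q)).1 (y : E (q+1)) := by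
    intro ρ a ha
    exact hwdG _ _ (by rw [hg2nd ρ, ha])
  have hφ₀add : ∀ ρ₁ ρ₂ : p, φ₀ (ρ₁ + ρ₂) = φ₀ ρ₁ + φ₀ ρ₂ := by
    intro ρ₁ ρ₂
    have h := hφ₀wd (ρ₁ + ρ₂) (g ρ₁ + g ρ₂) (by
      push_cast
      rw [Prod.snd_add, hg2nd ρ₁, hg2nd ρ₂])
    rw [h]
    push_cast
    rw [Prod.fst_add]
    rfl
  have hφ₀smul : ∀ (c : ℝ) (ρ : p), φ₀ (c • ρ) = c * φ₀ ρ := by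
    intro c ρ
    have h := hφ₀wd (c • ρ) (c • g ρ) (by
      push_cast
      rw [Prod.smul_snd, hg2nd ρ])
    rw [h]
    push_cast
    rw [Prod.smul_fst]
    rfl
  set φlin : p →ₗ[ℝ] ℝ :=
    { toFun := φ₀, map_add' := hφ₀add, map_smul' := hφ₀smul } with hφlin
  have hφbound : ∀ ρ : p, ‖φlin ρ‖ ≤ (C * ‖(y : E (q+1))‖) * ‖ρ‖ := by
    intro ρ
    have h1 : ‖φ₀ ρ‖ ≤ ‖((g ρ : G) : StrongDual ℝ (E (q+1)) × StrongDual ℝ (E q)).1‖ * ‖(y : E (q+1))‖ :=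
      ContinuousLinearMap.le_opNorm _ _
    have h2 : ‖((g ρ : G) : StrongDual ℝ (E (q+1)) × StrongDual ℝ (E q)).1‖ ≤ ‖g ρ‖ := norm_fst_le _
    have h3 : ‖g ρ‖ ≤ C * ‖ρ‖ := hg2 ρ
    calc ‖φ₀ ρ‖ ≤ ‖((g ρ : G) : StrongDual ℝ (E (q+1)) × StrongDual ℝ (E q)).1‖ * ‖(y : E (q+1))‖ := h1
      _ ≤ (C * ‖ρ‖) * ‖(y : E (q+1))‖ := by
          apply mul_le_mul_of_nonneg_right (h2.trans h3) (norm_nonneg _)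
      _ = (C * ‖(y : E (q+1))‖) * ‖ρ‖ := by ring
  set φ : p →L[ℝ] ℝ := @LinearMap.mkContinuous ℝ ℝ p ℝ _ _ _ _ _ _ (RingHom.id ℝ) φlin (C * ‖(y : E (q+1))‖) hφbound with hφ
  -- extend by Hahn-Banach and use reflexivity
  obtain ⟨ψ, hψ, -⟩ := exists_extension_norm_eq p φ
  obtain ⟨x, hx⟩ := hrefl q ψ
  have hxτ : ∀ τ : StrongDual ℝ (E q), τ x = ψ τ := by
    intro τ
    rw [← hx]
    rfl
  have hkey : ∀ σ : (d' q).domain, ((d' q) σ) x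
      = (σ : StrongDual ℝ (E (q+1))) (y : E (q+1)) := by
    intro σ
    have hmem : (d' q) σ ∈ p := ⟨⟨((σ : StrongDual ℝ (E (q+1))), (d' q) σ),
      (d' q).mem_graph σ⟩, rfl⟩
    have h1 : ψ ((d' q) σ) = φ ⟨(d' q) σ, hmem⟩ := hψ ⟨(d' q) σ, hmem⟩
    have h2 : φ ⟨(d' q) σ, hmem⟩
        = (σ : StrongDual ℝ (E (q+1))) (y : E (q+1)) := by
      have := hφ₀wd ⟨(d' q) σ, hmem⟩
        ⟨((σ : StrongDual ℝ (E (q+1))), (d' q) σ), (d' q).mem_graph σ⟩ rfl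
      exact this
    rw [hxτ, h1, h2]
  -- conclude that (x, y) lies in the graph of d q
  have hgraph : ((x : E q), (y : E (q+1))) ∈ (d q).graph := by
    by_contra hnot
    obtain ⟨f, u, hfs, hfx⟩ :=
      geometric_hahn_banach_closed_point ((d q).graph.convex) (hdc q) hnot
    have hf0 : ∀ a ∈ (d q).graph, f a = 0 := by
      intro a ha
      by_contra hfa
      have hmem : ((|u| + 1) / f a) • a ∈ (d q).graph :=
        Submodule.smul_mem _ _ ha
      have := hfs _ hmem
      rw [map_smul, smul_eq_mul, div_mul_cancel₀ _ hfa] at this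
      have : u ≤ |u| := le_abs_self u
      linarith [hfs _ hmem, div_mul_cancel₀ (|u| + 1) hfa]
    have hu : 0 < u := by
      have := hfs 0 (Submodule.zero_mem _)
      rwa [map_zero] at this
    set σf : StrongDual ℝ (E (q+1)) :=
      f.comp (ContinuousLinearMap.inr ℝ (E q) (E (q+1))) with hσf
    set τf : StrongDual ℝ (E q) :=
      f.comp (ContinuousLinearMap.inl ℝ (E q) (E (q+1))) with hτf
    have hsplit : ∀ (v : E q) (w : E (q+1)), f (v, w) = τf v + σf w := by
      intro v w
      have : (v, w) = ((v, 0) : E q × E (q+1)) + (0, w) := by simp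
      rw [this, map_add]
      rfl
    have hτσ : ∀ v : (d q).domain, (-τf) (v : E q) = σf ((d q) v) := by
      intro v
      have h0 : f ((v : E q), (d q) v) = 0 := hf0 _ ((d q).mem_graph v)
      rw [hsplit] at h0
      simp only [ContinuousLinearMap.neg_apply]
      linarith
    have hmemσ : σf ∈ (d' q).domain := ((hd' q).mem_domain_iff σf).2 ⟨-τf, hτσ⟩
    have hval : (d' q) ⟨σf, hmemσ⟩ = -τf := by
      apply hext
      intro v
      rw [(hd' q).apply_eq ⟨σf, hmemσ⟩ v]
      exact (hτσ v).symm
    have hkey' := hkey ⟨σf, hmemσ⟩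
    rw [hval] at hkey'
    have hfxy : f ((x : E q), (y : E (q+1))) = 0 := by
      rw [hsplit]
      simp only [ContinuousLinearMap.neg_apply] at hkey'
      linarith
    rw [hfxy] at hfx
    linarith
  rw [LinearPMap.mem_graph_iff] at hgraph
  obtain ⟨x₀, hx₀, hdx₀⟩ := hgraph
  exact ⟨x₀, hdx₀⟩
end
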